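/- Let A, B ∈ V be two nonzero tuples of matrices. Then the tuple AᵀB = (A_1ᵀB_1,…,A_LᵀB_L) is skew-symmetric (i.e., A_ℓᵀB_ℓ + B_ℓᵀA_ℓ = 0 for every ℓ = 1,…,L) if and only if there exists Q ∈ H = ∏_{ℓ=1}^L O(N_ℓ) such that A − B = Q·(A + B), i.e., A_ℓ − B_ℓ = Q_ℓ(A_ℓ + B_ℓ) for every ℓ. -/

import Mathlib

open scoped BigOperators
open Matrix

namespace GPR

variable {L : ℕ} {N R : Fin L → ℕ}

/-- The signal space: `L`-tuples of real `N ℓ × R ℓ` matrices. -/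
abbrev V (N R : Fin L → ℕ) := ∀ ℓ : Fin L, Matrix (Fin (N ℓ)) (Fin (R ℓ)) ℝ

/-- Frobenius norm of a tuple of matrices: `(Σ_ℓ Σ_{i,j} (X_ℓ)_{ij}²)^{1/2}`. -/
noncomputable def fnorm {m n : Fin L → ℕ} (X : ∀ ℓ : Fin L, Matrix (Fin (m ℓ)) (Fin (n ℓ)) ℝ) : ℝ :=
  Real.sqrt (∑ ℓ, ∑ i, ∑ j, (X ℓ i j) ^ 2)

/-- The group `H = ∏_ℓ O(N ℓ)`, as tuples of orthogonal matrices. -/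
abbrev HGroup (N : Fin L → ℕ) := ∀ ℓ : Fin L, Matrix.orthogonalGroup (Fin (N ℓ)) ℝ

/-- The action of `H` on `V`: `(Q · X)_ℓ = Q_ℓ X_ℓ`. -/
def act (Q : HGroup N) (X : V N R) : V N R :=
  fun ℓ => (Q ℓ : Matrix (Fin (N ℓ)) (Fin (N ℓ)) ℝ) * X ℓ

/-- `d_σ(X,Y) = min(‖X−Y‖, ‖X+Y‖)`. -/
noncomputable def dSigma (X Y : V N R) : ℝ := min (fnorm (X - Y)) (fnorm (X + Y))

/-- `d_H(X,Y) = min_{Q ∈ H} ‖X − Q·Y‖`. -/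
noncomputable def dH (X Y : V N R) : ℝ := ⨅ Q : HGroup N, fnorm (X - act Q Y)

/-- The positive semidefinite square root `√(XᵀX)` of the Gram matrix of a single matrix. -/
noncomputable def gramSqrt {n d : ℕ} (X : Matrix (Fin n) (Fin d) ℝ) : Matrix (Fin d) (Fin d) ℝ :=
  ((Matrix.posSemidef_conjTranspose_mul_self X).1.eigenvectorUnitary : Matrix (Fin d) (Fin d) ℝ) *
    diagonal ((RCLike.ofReal : ℝ → ℝ) ∘ (Real.sqrt ·) ∘ (Matrix.posSemidef_conjTranspose_mul_self X).1.eigenvalues) *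
    (star (Matrix.posSemidef_conjTranspose_mul_self X).1.eigenvectorUnitary : Matrix (Fin d) (Fin d) ℝ)

/-- The tuple `√(XᵀX) = (√(X₁ᵀX₁), …, √(X_LᵀX_L))`. -/
noncomputable def sqrtGram (X : V N R) : ∀ ℓ : Fin L, Matrix (Fin (R ℓ)) (Fin (R ℓ)) ℝ :=
  fun ℓ => gramSqrt (X ℓ)

/-- The second moment: tuple of Gram matrices `XᵀX = (X₁ᵀX₁, …, X_LᵀX_L)`. -/
def gram (X : V N R) : ∀ ℓ : Fin L, Matrix (Fin (R ℓ)) (Fin (R ℓ)) ℝ :=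
  fun ℓ => (X ℓ)ᵀ * X ℓ

/-- A set `S ⊆ V` is transverse to the orbits of `H` if whenever `X ∈ S` and `Q·X ∈ S`,
one has `Q·X = X` or `Q·X = −X`. -/
def Transverse (S : Set (V N R)) : Prop :=
  ∀ X ∈ S, ∀ Q : HGroup N, act Q X ∈ S → act Q X = X ∨ act Q X = -X

private lemma dot_core {n r : ℕ} (X : Matrix (Fin n) (Fin r) ℝ) (u v : Fin r → ℝ) :
    (X *ᵥ u) ⬝ᵥ (X *ᵥ v) = ((Xᵀ * X) *ᵥ u) ⬝ᵥ v := by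
  rw [Matrix.dotProduct_mulVec, ← Matrix.mulVec_transpose, Matrix.mulVec_mulVec]

private lemma exists_orthogonal_of_gram_eq {n r : ℕ} (X Y : Matrix (Fin n) (Fin r) ℝ)
    (h : Xᵀ * X = Yᵀ * Y) :
    ∃ Q ∈ Matrix.orthogonalGroup (Fin n) ℝ, X = Q * Y := by
  classical
  set f : EuclideanSpace ℝ (Fin r) →ₗ[ℝ] EuclideanSpace ℝ (Fin n) := Matrix.toEuclideanLin Y with hf
  set g : EuclideanSpace ℝ (Fin r) →ₗ[ℝ] EuclideanSpace ℝ (Fin n) := Matrix.toEuclideanLin X with hg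
  have key : ∀ u v : EuclideanSpace ℝ (Fin r),
      inner ℝ (g u) (g v) = inner ℝ (f u) (f v) := by
    intro u v
    simp only [hf, hg, Matrix.toEuclideanLin_apply, PiLp.inner_apply, RCLike.inner_apply,
      starRingEnd_apply, star_trivial]
    have hd : ∀ (Z : Matrix (Fin n) (Fin r) ℝ),
        (∑ i, (WithLp.equiv 2 _).symm (Z *ᵥ (WithLp.equiv 2 _) u) i *
          (WithLp.equiv 2 _).symm (Z *ᵥ (WithLp.equiv 2 _) v) i : ℝ)
        = ((Zᵀ * Z) *ᵥ (WithLp.equiv 2 _) u) ⬝ᵥ (WithLp.equiv 2 _) v := by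
      intro Z
      rw [← dot_core]
      rfl
    change (X *ᵥ v.ofLp) ⬝ᵥ (X *ᵥ u.ofLp) = (Y *ᵥ v.ofLp) ⬝ᵥ (Y *ᵥ u.ofLp)
    rw [dot_core, dot_core, h]
  have hnorm : ∀ u, ‖g u‖ = ‖f u‖ := by
    intro u
    rw [@norm_eq_sqrt_real_inner, @norm_eq_sqrt_real_inner, key]
  have hker : LinearMap.ker f ≤ LinearMap.ker g := by
    intro u hu
    rw [LinearMap.mem_ker] at hu ⊢
    rw [← norm_eq_zero, hnorm, hu, norm_zero]
  let e := f.quotKerEquivRange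
  let φlin : (LinearMap.range f : Submodule ℝ (EuclideanSpace ℝ (Fin n))) →ₗ[ℝ]
      EuclideanSpace ℝ (Fin n) :=
    ((LinearMap.ker f).liftQ g hker).comp e.symm.toLinearMap
  have hφlin : ∀ u : EuclideanSpace ℝ (Fin r),
      φlin ⟨f u, LinearMap.mem_range_self f u⟩ = g u := by
    intro u
    have h1 : e.symm ⟨f u, LinearMap.mem_range_self f u⟩ = Submodule.Quotient.mk u := by
      rw [LinearEquiv.symm_apply_eq]
      ext
      simp [e, LinearMap.quotKerEquivRange_apply_mk]
    simp [φlin, h1, Submodule.liftQ_apply]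
  let φ : (LinearMap.range f : Submodule ℝ (EuclideanSpace ℝ (Fin n))) →ₗᵢ[ℝ]
      EuclideanSpace ℝ (Fin n) :=
    { toLinearMap := φlin
      norm_map' := by
        rintro ⟨s, u, rfl⟩
        rw [hφlin u, hnorm u]
        rfl }
  let Φ := φ.extend
  have hΦ : ∀ u, Φ (f u) = g u := by
    intro u
    have := φ.extend_apply ⟨f u, LinearMap.mem_range_self f u⟩
    rw [this]
    exact hφlin u
  set Q : Matrix (Fin n) (Fin n) ℝ := Matrix.toEuclideanLin.symm Φ.toLinearMap with hQdef
  have hQ : ∀ x : EuclideanSpace ℝ (Fin n), Matrix.toEuclideanLin Q x = Φ x := by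
    intro x
    rw [hQdef, LinearEquiv.apply_symm_apply]
    rfl
  have hmul : ∀ x : Fin n → ℝ, Q *ᵥ x = (WithLp.equiv 2 _)
      (Φ ((WithLp.equiv 2 (Fin n → ℝ)).symm x)) := by
    intro x
    have := hQ ((WithLp.equiv 2 (Fin n → ℝ)).symm x)
    rw [Matrix.toEuclideanLin_apply] at this
    simpa using congrArg (WithLp.equiv 2 (Fin n → ℝ)) this
  have hpres : ∀ x y : Fin n → ℝ, (Q *ᵥ x) ⬝ᵥ (Q *ᵥ y) = x ⬝ᵥ y := by
    intro x y
    rw [hmul, hmul]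
    have h' := Φ.inner_map_map ((WithLp.equiv 2 (Fin n → ℝ)).symm x)
      ((WithLp.equiv 2 (Fin n → ℝ)).symm y)
    rw [PiLp.inner_apply, PiLp.inner_apply] at h'
    simp only [RCLike.inner_apply, starRingEnd_apply, star_trivial] at h'
    rw [dotProduct_comm, dotProduct_comm x]
    simpa [dotProduct] using h'
  have hQQ : Qᵀ * Q = 1 := by
    have h1 : ∀ x : Fin n → ℝ, (Qᵀ * Q) *ᵥ x = x := by
      intro x
      apply dotProduct_eq
      intro y
      rw [← dot_core Q x y, hpres]
    apply Matrix.toLin'.injective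
    apply LinearMap.ext
    intro x
    simp [Matrix.toLin'_apply, h1]
  refine ⟨Q, ?_, ?_⟩
  · rw [Matrix.mem_orthogonalGroup_iff']
    simpa using hQQ
  · apply Matrix.toLin'.injective
    apply LinearMap.ext
    intro u
    have h2 := congrArg (WithLp.equiv 2 (Fin n → ℝ))
      (hΦ ((WithLp.equiv 2 (Fin r → ℝ)).symm u))
    rw [hf, hg, Matrix.toEuclideanLin_apply, Matrix.toEuclideanLin_apply] at h2
    simp only [Matrix.toLin'_apply]
    rw [← Matrix.mulVec_mulVec, hmul]
    simpa using h2.symm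

/-- For nonzero `A, B ∈ V`, the tuple `AᵀB` is skew-symmetric iff there is
`Q ∈ H` with `A − B = Q·(A + B)`. -/
theorem skew_iff_exists_orthogonal
    (L : ℕ) (hL : 0 < L) (N R : Fin L → ℕ) (hN : ∀ ℓ, 0 < N ℓ) (hR : ∀ ℓ, 0 < R ℓ)
    (A B : V N R) (hA : A ≠ 0) (hB : B ≠ 0) :
    (∀ ℓ, (A ℓ)ᵀ * B ℓ + (B ℓ)ᵀ * A ℓ = 0) ↔
      (∃ Q : HGroup N, A - B = act Q (A + B)) := by
  constructor
  · intro hskew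
    have hgram : ∀ ℓ, (A ℓ - B ℓ)ᵀ * (A ℓ - B ℓ) = (A ℓ + B ℓ)ᵀ * (A ℓ + B ℓ) := by
      intro ℓ
      have h0 := hskew ℓ
      simp only [Matrix.transpose_sub, Matrix.transpose_add, Matrix.sub_mul, Matrix.add_mul,
        Matrix.mul_sub, Matrix.mul_add]
      have : (A ℓ)ᵀ * B ℓ = -((B ℓ)ᵀ * A ℓ) := by
        rw [← add_eq_zero_iff_eq_neg]; exact h0
      rw [this]; abel
    choose Qm hQmem hQeq using fun ℓ =>
      exists_orthogonal_of_gram_eq (A ℓ - B ℓ) (A ℓ + B ℓ) (hgram ℓ)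
    refine ⟨fun ℓ => ⟨Qm ℓ, hQmem ℓ⟩, funext fun ℓ => ?_⟩
    show A ℓ - B ℓ = Qm ℓ * (A ℓ + B ℓ)
    exact hQeq ℓ
  · rintro ⟨Q, hQ⟩ ℓ
    have hℓ : A ℓ - B ℓ = (Q ℓ : Matrix (Fin (N ℓ)) (Fin (N ℓ)) ℝ) * (A ℓ + B ℓ) :=
      congrFun hQ ℓ
    have hQQ : (Q ℓ : Matrix (Fin (N ℓ)) (Fin (N ℓ)) ℝ)ᵀ
        * (Q ℓ : Matrix (Fin (N ℓ)) (Fin (N ℓ)) ℝ) = 1 := by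
      have := (Q ℓ).2.1
      simpa [Matrix.star_eq_conjTranspose] using this
    have h1 : (A ℓ - B ℓ)ᵀ * (A ℓ - B ℓ) = (A ℓ + B ℓ)ᵀ * (A ℓ + B ℓ) := by
      rw [hℓ, Matrix.transpose_mul, Matrix.mul_assoc,
        ← Matrix.mul_assoc (Q ℓ : Matrix (Fin (N ℓ)) (Fin (N ℓ)) ℝ)ᵀ, hQQ, Matrix.one_mul]
    simp only [Matrix.transpose_sub, Matrix.transpose_add, Matrix.sub_mul, Matrix.add_mul,
      Matrix.mul_sub, Matrix.mul_add] at h1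
    have h2 : (A ℓ)ᵀ * B ℓ + (B ℓ)ᵀ * A ℓ + ((A ℓ)ᵀ * B ℓ + (B ℓ)ᵀ * A ℓ) = 0 := by
      have h3 := sub_eq_zero_of_eq h1.symm
      rw [← h3]; abel
    have h4 : (2 : ℝ) • ((A ℓ)ᵀ * B ℓ + (B ℓ)ᵀ * A ℓ) = 0 := by
      rw [two_smul]; exact h2
    rcases smul_eq_zero.mp h4 with h | h
    · norm_num at h
    · exact h

end GPR
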